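/- arXiv:2405.05181 — 3 statements merged into one kernel-verified Lean document; each statement's English description precedes it below -/
import Mathlib

section
/- Let 0 < A < 1/2 and let f : [0,1] → ℝ be 1-periodic, differentiable on (0,1), with |f'(t)| ≤ K · min(t, 1-t)^{-1-A} for all t ∈ (0,1). Then there is a constant C (depending on A and K) such that the Fourier coefficients satisfy |c_n| ≤ C · |n|^{-1+A} for all nonzero integers n. -/
open MeasureTheory intervalIntegral Real

set_option maxHeartbeats 1000000 in
theorem stmt_3 (A K : ℝ) (hA0 : 0 < A) (hA1 : A < 1 / 2)
    (f f' : ℝ → ℝ) (hper : Function.Periodic f 1)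
    (hderiv : ∀ t ∈ Set.Ioo (0:ℝ) 1, HasDerivAt f (f' t) t)
    (hbound : ∀ t ∈ Set.Ioo (0:ℝ) 1, |f' t| ≤ K * (min t (1 - t)) ^ (-1 - A))
    (hL2 : MemLp f 2 (MeasureTheory.volume.restrict (Set.Icc (0:ℝ) 1))) :
    ∃ C : ℝ, ∀ n : ℤ, n ≠ 0 →
      ‖∫ t in (0:ℝ)..1, (f t : ℂ) * Complex.exp (-2 * Real.pi * Complex.I * n * t)‖
        ≤ C * |(n : ℝ)| ^ (-1 + A) := by
  have hπ : (1:ℝ) ≤ π := by linarith [Real.pi_gt_three]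
  have hK : 0 ≤ K := by
    have h := hbound (1/2) (by norm_num)
    have hpos : (0:ℝ) < (min (1/2 : ℝ) (1 - 1/2)) ^ (-1 - A) :=
      Real.rpow_pos_of_pos (by norm_num) _
    nlinarith [abs_nonneg (f' (1/2))]
  set B : ℝ := |f (1/2)| + K / A with hBdef
  have hB0 : 0 ≤ B := by positivity
  set φ : ℝ → ℝ := deriv f with hφdef
  have hφd : ∀ t ∈ Set.Ioo (0:ℝ) 1, HasDerivAt f (φ t) t := fun t ht =>
    (hderiv t ht).differentiableAt.hasDerivAt
  have hφb : ∀ t ∈ Set.Ioo (0:ℝ) 1, |φ t| ≤ K * (min t (1 - t)) ^ (-1 - A) := fun t ht => by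
    rw [hφdef, (hderiv t ht).deriv]; exact hbound t ht
  have hφm : Measurable φ := measurable_deriv f
  -- continuity of the weight on the open interval
  have hgcont : ∀ e : ℝ, ContinuousOn (fun t : ℝ => K * (min t (1 - t)) ^ e) (Set.Ioo 0 1) := by
    intro e
    refine continuousOn_const.mul (ContinuousOn.rpow_const ?_ ?_)
    · exact (continuous_id.min (continuous_const.sub continuous_id)).continuousOn
    · intro t ht
      exact Or.inl (ne_of_gt (lt_min ht.1 (by linarith [ht.2])))
  -- integrability of φ on compact subintervals of (0,1)
  have hφint : ∀ a b : ℝ, 0 < a → a ≤ b → b < 1 → IntervalIntegrable φ volume a b := by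
    intro a b ha hab hb
    have hsub : Set.uIcc a b ⊆ Set.Ioo 0 1 := by
      rw [Set.uIcc_of_le hab]
      exact fun x hx => ⟨lt_of_lt_of_le ha hx.1, lt_of_le_of_lt hx.2 hb⟩
    have hg : IntervalIntegrable (fun t => K * (min t (1 - t)) ^ (-1 - A)) volume a b :=
      ((hgcont (-1 - A)).mono hsub).intervalIntegrable
    refine hg.mono_fun (hφm.aestronglyMeasurable.restrict) ?_
    refine (ae_restrict_iff' measurableSet_uIoc).2 (Filter.Eventually.of_forall fun x hx => ?_)
    have hx' : x ∈ Set.Ioo (0:ℝ) 1 := by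
      rw [Set.uIoc_of_le hab] at hx
      exact ⟨lt_of_lt_of_le ha (le_of_lt hx.1), lt_of_le_of_lt hx.2 hb⟩
    have h1 := hφb x hx'
    have h2 : 0 ≤ K * (min x (1 - x)) ^ (-1 - A) :=
      mul_nonneg hK (Real.rpow_nonneg (le_of_lt (lt_min hx'.1 (by linarith [hx'.2]))) _)
    simp only [Real.norm_eq_abs]
    rw [abs_of_nonneg h2]
    exact h1
  -- fundamental theorem of calculus on compact subintervals of (0,1)
  have hftc : ∀ a b : ℝ, 0 < a → a ≤ b → b < 1 → f b - f a = ∫ s in a..b, φ s := by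
    intro a b ha hab hb
    refine (intervalIntegral.integral_eq_sub_of_hasDerivAt (fun t ht => ?_)
      (hφint a b ha hab hb)).symm
    rw [Set.uIcc_of_le hab] at ht
    exact hφd t ⟨lt_of_lt_of_le ha ht.1, lt_of_le_of_lt ht.2 hb⟩
  -- elementary rpow integral estimate near 0
  have hrint : ∀ x : ℝ, 0 < x → x ≤ 1/2 →
      (0 ≤ ∫ s in x..(1/2:ℝ), s ^ (-1 - A)) ∧
        (∫ s in x..(1/2:ℝ), s ^ (-1 - A)) ≤ x ^ (-A) / A := by
    intro x hx hx2
    have h0 : (0:ℝ) ∉ Set.uIcc x (1/2) := by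
      rw [Set.uIcc_of_le hx2]; intro h; exact absurd h.1 (not_le.2 hx)
    have hcomp : (∫ s in x..(1/2:ℝ), s ^ (-1 - A)) = (x ^ (-A) - (1/2:ℝ) ^ (-A)) / A := by
      rw [integral_rpow (Or.inr ⟨by intro h; nlinarith, h0⟩)]
      rw [show (-1 : ℝ) - A + 1 = -A by ring]
      rw [div_neg, ← neg_div, neg_sub]
    have hmono : (1/2:ℝ) ^ (-A) ≤ x ^ (-A) :=
      Real.rpow_le_rpow_of_nonpos hx hx2 (by linarith)
    have hhalf : (0:ℝ) ≤ (1/2:ℝ) ^ (-A) := Real.rpow_nonneg (by norm_num) _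
    refine ⟨by rw [hcomp]; exact div_nonneg (by linarith) hA0.le, ?_⟩
    rw [hcomp]; gcongr; linarith
  -- rpow integral near 0 with exponent -A
  have hr0 : ∀ d : ℝ, 0 < d → (∫ s in (0:ℝ)..d, s ^ (-A)) = d ^ (1-A) / (1-A) := by
    intro d hd
    rw [integral_rpow (Or.inl (by linarith))]
    rw [show -A + 1 = 1 - A by ring, Real.zero_rpow (by intro h; nlinarith), sub_zero]
  -- pointwise bound on f
  have hfb : ∀ t ∈ Set.Ioo (0:ℝ) 1, |f t| ≤ B * (min t (1 - t)) ^ (-A) := by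
    intro t ht
    rcases le_total t (1/2) with htle | htge
    · have hmin : min t (1 - t) = t := min_eq_left (by linarith)
      rw [hmin]
      have hket : |∫ s in t..(1/2:ℝ), φ s| ≤ K / A * t ^ (-A) := by
        have hb : ∀ᵐ s ∂(volume.restrict (Set.uIoc t (1/2:ℝ))), ‖φ s‖ ≤ K * s ^ (-1 - A) := by
          refine (ae_restrict_iff' measurableSet_uIoc).2
            (Filter.Eventually.of_forall fun s hs => ?_)
          rw [Set.uIoc_of_le htle] at hs
          have hs' : s ∈ Set.Ioo (0:ℝ) 1 := ⟨lt_trans ht.1 hs.1, by linarith [hs.2]⟩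
          have hmins : min s (1 - s) = s := min_eq_left (by linarith [hs.2])
          calc ‖φ s‖ = |φ s| := rfl
            _ ≤ K * (min s (1 - s)) ^ (-1 - A) := hφb s hs'
            _ = K * s ^ (-1 - A) := by rw [hmins]
        have hgint : IntervalIntegrable (fun s : ℝ => s ^ (-1 - A)) volume t (1/2) := by
          refine intervalIntegrable_rpow (Or.inr ?_)
          rw [Set.uIcc_of_le htle]; intro h; exact absurd h.1 (not_le.2 ht.1)
        have h := intervalIntegral.norm_integral_le_abs_of_norm_le hb (hgint.const_mul K)
        rw [Real.norm_eq_abs] at h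
        refine h.trans ?_
        rw [intervalIntegral.integral_const_mul, abs_mul, abs_of_nonneg hK]
        rw [abs_of_nonneg (hrint t ht.1 htle).1]
        calc K * ∫ s in t..(1/2:ℝ), s ^ (-1 - A) ≤ K * (t ^ (-A) / A) := by
              exact mul_le_mul_of_nonneg_left (hrint t ht.1 htle).2 hK
          _ = K / A * t ^ (-A) := by ring
      have hval : f (1/2) - f t = ∫ s in t..(1/2:ℝ), φ s :=
        hftc t (1/2) ht.1 htle (by norm_num)
      have h1t : (1:ℝ) ≤ t ^ (-A) :=
        Real.one_le_rpow_of_pos_of_le_one_of_nonpos ht.1 (by linarith) (by linarith)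
      have habs : |f t| ≤ |f (1/2)| + K / A * t ^ (-A) := by
        have h2 : |f t| ≤ |f (1/2)| + |∫ s in t..(1/2:ℝ), φ s| := by
          rw [← hval]
          calc |f t| = |f (1/2) - (f (1/2) - f t)| := by rw [sub_sub_cancel]
            _ ≤ |f (1/2)| + |f (1/2) - f t| := abs_sub _ _
        linarith [hket]
      rw [hBdef]
      nlinarith [mul_le_mul_of_nonneg_left h1t (abs_nonneg (f (1/2)))]
    · have hmin : min t (1 - t) = 1 - t := min_eq_right (by linarith)
      rw [hmin]
      have hket : |∫ s in (1/2:ℝ)..t, φ s| ≤ K / A * (1 - t) ^ (-A) := by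
        have hb : ∀ᵐ s ∂(volume.restrict (Set.uIoc (1/2:ℝ) t)), ‖φ s‖ ≤ K * (1 - s) ^ (-1 - A) := by
          refine (ae_restrict_iff' measurableSet_uIoc).2
            (Filter.Eventually.of_forall fun s hs => ?_)
          rw [Set.uIoc_of_le htge] at hs
          have hs' : s ∈ Set.Ioo (0:ℝ) 1 := ⟨by linarith [hs.1], lt_of_le_of_lt hs.2 ht.2⟩
          have hmins : min s (1 - s) = 1 - s := min_eq_right (by linarith [hs.1])
          calc ‖φ s‖ = |φ s| := rfl
            _ ≤ K * (min s (1 - s)) ^ (-1 - A) := hφb s hs'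
            _ = K * (1 - s) ^ (-1 - A) := by rw [hmins]
        have hgint : IntervalIntegrable (fun s : ℝ => (1 - s) ^ (-1 - A)) volume (1/2) t := by
          refine ContinuousOn.intervalIntegrable (ContinuousOn.rpow_const
            ((continuous_const.sub continuous_id).continuousOn) fun s hs => Or.inl ?_)
          rw [Set.uIcc_of_le htge] at hs
          have : s < 1 := lt_of_le_of_lt hs.2 ht.2
          intro h; linarith [sub_eq_zero.1 h]
        have h := intervalIntegral.norm_integral_le_abs_of_norm_le hb (hgint.const_mul K)
        rw [Real.norm_eq_abs] at h
        refine h.trans ?_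
        rw [intervalIntegral.integral_const_mul]
        have hsub : (∫ s in (1/2:ℝ)..t, (1 - s) ^ (-1 - A)) =
            ∫ u in (1-t)..(1/2:ℝ), u ^ (-1 - A) := by
          have := intervalIntegral.integral_comp_sub_left (a := (1/2:ℝ)) (b := t)
            (fun u : ℝ => u ^ (-1 - A)) 1
          rw [this]; norm_num
        rw [hsub, abs_mul, abs_of_nonneg hK]
        have h1t : 0 < 1 - t := by linarith [ht.2]
        have h1t2 : 1 - t ≤ 1/2 := by linarith
        rw [abs_of_nonneg (hrint (1-t) h1t h1t2).1]
        calc K * ∫ u in (1-t)..(1/2:ℝ), u ^ (-1 - A) ≤ K * ((1-t) ^ (-A) / A) :=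
              mul_le_mul_of_nonneg_left (hrint (1-t) h1t h1t2).2 hK
          _ = K / A * (1-t) ^ (-A) := by ring
      have hval : f t - f (1/2) = ∫ s in (1/2:ℝ)..t, φ s :=
        hftc (1/2) t (by norm_num) htge ht.2
      have h1t : (1:ℝ) ≤ (1-t) ^ (-A) :=
        Real.one_le_rpow_of_pos_of_le_one_of_nonpos (by linarith [ht.2]) (by linarith)
          (by linarith)
      have habs : |f t| ≤ |f (1/2)| + K / A * (1-t) ^ (-A) := by
        have hft : f t = f (1/2) + (f t - f (1/2)) := by ring
        rw [hft]
        refine (abs_add_le _ _).trans ?_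
        rw [hval]
        linarith [hket]
      rw [hBdef]
      nlinarith [mul_le_mul_of_nonneg_left h1t (abs_nonneg (f (1/2)))]
  -- integrability of the majorant of f on [0,1]
  have hgBint : IntervalIntegrable (fun t : ℝ => B * (min t (1 - t)) ^ (-A)) volume 0 1 := by
    have hiff : ∀ a b : ℝ, a ≤ b → ∀ g : ℝ → ℝ,
        IntervalIntegrable g volume a b ↔ IntegrableOn g (Set.Ioc a b) volume := by
      intro a b hab g
      rw [intervalIntegrable_iff, Set.uIoc_of_le hab]
    have h1 : IntervalIntegrable (fun t : ℝ => B * t ^ (-A)) volume 0 (1/2) :=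
      (intervalIntegrable_rpow' (by linarith)).const_mul B
    have h1' : IntervalIntegrable (fun t : ℝ => B * (min t (1 - t)) ^ (-A)) volume 0 (1/2) := by
      rw [hiff _ _ (by norm_num)] at h1 ⊢
      refine h1.congr_fun (fun x hx => ?_) measurableSet_Ioc
      rw [min_eq_left (by linarith [hx.1, hx.2])]
    have h2 : IntervalIntegrable (fun t : ℝ => B * (1 - t) ^ (-A)) volume (1/2) 1 := by
      have := ((intervalIntegrable_rpow' (show (-1:ℝ) < -A by linarith)
        (a := 0) (b := 1/2)).const_mul B).comp_sub_left 1
      norm_num at this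
      exact this.symm
    have h2' : IntervalIntegrable (fun t : ℝ => B * (min t (1 - t)) ^ (-A)) volume (1/2) 1 := by
      rw [hiff _ _ (by norm_num)] at h2 ⊢
      refine h2.congr_fun (fun x hx => ?_) measurableSet_Ioc
      rw [min_eq_right (by linarith [hx.1, hx.2])]
    exact h1'.trans h2'
  -- a.e. strong measurability and integrability of f on [0,1]
  have hfaesm : AEStronglyMeasurable f (volume.restrict (Set.Ioc (0:ℝ) 1)) :=
    hL2.aestronglyMeasurable.mono_measure
      (Measure.restrict_mono Set.Ioc_subset_Icc_self le_rfl)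
  have haefb : ∀ᵐ x ∂(volume.restrict (Set.Ioc (0:ℝ) 1)),
      ‖f x‖ ≤ B * (min x (1 - x)) ^ (-A) := by
    rw [← Measure.restrict_congr_set MeasureTheory.Ioo_ae_eq_Ioc]
    refine (ae_restrict_iff' measurableSet_Ioo).2 (Filter.Eventually.of_forall fun x hx => ?_)
    simpa [Real.norm_eq_abs] using hfb x hx
  have hI01 : Set.uIoc (0:ℝ) 1 = Set.Ioc (0:ℝ) 1 := Set.uIoc_of_le (by norm_num)
  have hfint : IntervalIntegrable f volume 0 1 := by
    refine hgBint.mono_fun' ?_ ?_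
    · rw [hI01]; exact hfaesm
    · rw [hI01]; exact haefb
  refine ⟨2*B/(1-A) + 2*(B + K/A), fun n hn => ?_⟩
  -- setup for a fixed frequency n
  have hN1 : (1:ℝ) ≤ |(n:ℝ)| := by exact_mod_cast Int.one_le_abs hn
  set N : ℝ := |(n:ℝ)| with hNdef
  have hN0 : 0 < N := lt_of_lt_of_le one_pos hN1
  set δ : ℝ := (2*N)⁻¹ with hδdef
  have hδ0 : 0 < δ := by positivity
  have hδh : δ ≤ 1/2 := by
    rw [hδdef]
    rw [show (1:ℝ)/2 = 2⁻¹ by norm_num]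
    exact inv_anti₀ (by norm_num) (by linarith)
  have hδ1 : δ ≤ 1 - δ := by linarith
  -- norm computations for the exponential
  have habse : ∀ t : ℝ, ‖Complex.exp (-2 * Real.pi * Complex.I * n * t)‖ = 1 := by
    intro t
    rw [show (-2 * (Real.pi:ℂ) * Complex.I * (n:ℂ) * (t:ℂ))
        = ((-2 * Real.pi * (n:ℝ) * t : ℝ) : ℂ) * Complex.I by push_cast; ring]
    exact Complex.norm_exp_ofReal_mul_I _
  have hFnorm : ∀ t : ℝ,
      ‖(f t : ℂ) * Complex.exp (-2 * Real.pi * Complex.I * n * t)‖ = |f t| := by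
    intro t
    rw [norm_mul, habse t, mul_one,
      Complex.norm_real, Real.norm_eq_abs]
  -- integrability of the integrand on subintervals of [0,1]
  have hecont : Continuous fun t : ℝ => Complex.exp (-2 * Real.pi * Complex.I * n * t) := by
    fun_prop
  have hFint : ∀ a b : ℝ, 0 ≤ a → a ≤ b → b ≤ 1 →
      IntervalIntegrable (fun t => (f t : ℂ) * Complex.exp (-2 * Real.pi * Complex.I * n * t))
        volume a b := by
    intro a b ha hab hb
    have hsub : Set.uIcc a b ⊆ Set.uIcc (0:ℝ) 1 := by
      rw [Set.uIcc_of_le hab, Set.uIcc_of_le (by norm_num : (0:ℝ) ≤ 1)]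
      exact fun x hx => ⟨le_trans ha hx.1, le_trans hx.2 hb⟩
    refine (hfint.mono_set hsub).mono_fun ?_ ?_
    · have hmle : volume.restrict (Set.uIoc a b) ≤ volume.restrict (Set.Ioc (0:ℝ) 1) := by
        refine Measure.restrict_mono ?_ le_rfl
        rw [Set.uIoc_of_le hab]
        exact fun x hx => ⟨lt_of_le_of_lt ha hx.1, le_trans hx.2 hb⟩
      exact ((Complex.continuous_ofReal.comp_aestronglyMeasurable
        (hfaesm.mono_measure hmle))).mul (hecont.aestronglyMeasurable.mono_measure
          Measure.restrict_le_self |>.mono_measure (le_of_eq rfl))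
    · refine Filter.Eventually.of_forall fun x => ?_
      simpa [Real.norm_eq_abs] using (hFnorm x).le
  -- split the integral
  have hi1 := hFint 0 δ le_rfl hδ0.le (by linarith)
  have hi2 := hFint δ (1-δ) hδ0.le hδ1 (by linarith)
  have hi3 := hFint (1-δ) 1 (by linarith) (by linarith) le_rfl
  have hi23 := hFint δ 1 hδ0.le (by linarith) le_rfl
  have hs1 := intervalIntegral.integral_add_adjacent_intervals hi1 hi23
  have hs2 := intervalIntegral.integral_add_adjacent_intervals hi2 hi3
  rw [← hs1, ← hs2]
  -- bound on the first tail
  have h1A : (0:ℝ) < 1 - A := by linarith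
  have hδpow : δ ^ (1-A) ≤ N ^ (A-1) := by
    have e1 : δ ^ (1-A) = ((2*N) ^ (1-A))⁻¹ := by
      rw [hδdef, Real.inv_rpow (by positivity)]
    have e2 : ((2*N) ^ (1-A))⁻¹ = (2*N) ^ (A-1) := by
      rw [← Real.rpow_neg (by positivity), show -(1-A) = A - 1 by ring]
    rw [e1, e2]
    exact Real.rpow_le_rpow_of_nonpos hN0 (by linarith) (by linarith)
  have hT1 : ‖∫ t in (0:ℝ)..δ,
      (f t : ℂ) * Complex.exp (-2 * Real.pi * Complex.I * n * t)‖ ≤ B / (1-A) * N ^ (A-1) := by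
    have hb : ∀ᵐ t ∂(volume.restrict (Set.uIoc (0:ℝ) δ)),
        ‖(f t : ℂ) * Complex.exp (-2 * Real.pi * Complex.I * n * t)‖ ≤ B * t ^ (-A) := by
      refine (ae_restrict_iff' measurableSet_uIoc).2 (Filter.Eventually.of_forall fun t ht => ?_)
      rw [Set.uIoc_of_le hδ0.le] at ht
      have ht' : t ∈ Set.Ioo (0:ℝ) 1 := ⟨ht.1, by linarith [ht.2]⟩
      have hmin : min t (1 - t) = t := min_eq_left (by linarith [ht.2])
      calc ‖(f t : ℂ) * Complex.exp (-2 * Real.pi * Complex.I * n * t)‖ = |f t| := hFnorm t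
        _ ≤ B * (min t (1 - t)) ^ (-A) := hfb t ht'
        _ = B * t ^ (-A) := by rw [hmin]
    have hgi : IntervalIntegrable (fun t : ℝ => B * t ^ (-A)) volume 0 δ :=
      (intervalIntegrable_rpow' (by linarith)).const_mul B
    have h := intervalIntegral.norm_integral_le_abs_of_norm_le hb hgi
    refine h.trans ?_
    rw [intervalIntegral.integral_const_mul, hr0 δ hδ0]
    rw [abs_of_nonneg (mul_nonneg hB0 (div_nonneg (Real.rpow_nonneg hδ0.le _) h1A.le))]
    calc B * (δ ^ (1-A) / (1-A)) = B / (1-A) * δ ^ (1-A) := by ring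
      _ ≤ B / (1-A) * N ^ (A-1) :=
          mul_le_mul_of_nonneg_left hδpow (div_nonneg hB0 h1A.le)
  have hT3 : ‖∫ t in (1-δ)..1,
      (f t : ℂ) * Complex.exp (-2 * Real.pi * Complex.I * n * t)‖ ≤ B / (1-A) * N ^ (A-1) := by
    have hb : ∀ᵐ t ∂(volume.restrict (Set.uIoc (1-δ) 1)),
        ‖(f t : ℂ) * Complex.exp (-2 * Real.pi * Complex.I * n * t)‖ ≤ B * (1-t) ^ (-A) := by
      rw [show Set.uIoc (1-δ) 1 = Set.Ioc (1-δ) 1 from Set.uIoc_of_le (by linarith),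
        ← Measure.restrict_congr_set MeasureTheory.Ioo_ae_eq_Ioc]
      refine (ae_restrict_iff' measurableSet_Ioo).2 (Filter.Eventually.of_forall fun t ht => ?_)
      have ht' : t ∈ Set.Ioo (0:ℝ) 1 := ⟨by linarith [ht.1], ht.2⟩
      have hmin : min t (1 - t) = 1 - t := min_eq_right (by linarith [ht.1])
      calc ‖(f t : ℂ) * Complex.exp (-2 * Real.pi * Complex.I * n * t)‖ = |f t| := hFnorm t
        _ ≤ B * (min t (1 - t)) ^ (-A) := hfb t ht'
        _ = B * (1-t) ^ (-A) := by rw [hmin]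
    have hgi : IntervalIntegrable (fun t : ℝ => B * (1-t) ^ (-A)) volume (1-δ) 1 := by
      have h0 := ((intervalIntegrable_rpow' (show (-1:ℝ) < -A by linarith) (a := 0)
        (b := δ)).const_mul B).comp_sub_left 1
      norm_num at h0
      exact h0.symm
    have h := intervalIntegral.norm_integral_le_abs_of_norm_le hb hgi
    refine h.trans ?_
    have hval : (∫ t in (1-δ)..1, B * (1-t) ^ (-A)) = B * (δ ^ (1-A) / (1-A)) := by
      rw [intervalIntegral.integral_const_mul]
      have hcs := intervalIntegral.integral_comp_sub_left (a := 1-δ) (b := 1)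
        (fun u : ℝ => u ^ (-A)) 1
      rw [hcs, show (1:ℝ) - 1 = 0 by norm_num, show (1:ℝ) - (1-δ) = δ by ring, hr0 δ hδ0]
    rw [hval,
      abs_of_nonneg (mul_nonneg hB0 (div_nonneg (Real.rpow_nonneg hδ0.le _) h1A.le))]
    calc B * (δ ^ (1-A) / (1-A)) = B / (1-A) * δ ^ (1-A) := by ring
      _ ≤ B / (1-A) * N ^ (A-1) :=
          mul_le_mul_of_nonneg_left hδpow (div_nonneg hB0 h1A.le)
  have hT2 : ‖∫ t in δ..(1-δ),
      (f t : ℂ) * Complex.exp (-2 * Real.pi * Complex.I * n * t)‖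
      ≤ 2*(B + K/A) * N ^ (A-1) := by
    set c : ℂ := -2 * Real.pi * Complex.I * n with hcdef
    have hcne : c ≠ 0 := by
      rw [hcdef]
      refine mul_ne_zero (mul_ne_zero (mul_ne_zero ?_ ?_) Complex.I_ne_zero) ?_
      · norm_num
      · exact Complex.ofReal_ne_zero.2 Real.pi_ne_zero
      · exact_mod_cast hn
    have hπN : (0:ℝ) < 2*π*N := by nlinarith [Real.pi_pos]
    have habsc : ‖c‖ = 2 * π * N := by
      rw [hcdef, hNdef]
      simp only [norm_mul, Complex.norm_I, Complex.norm_real, Complex.norm_intCast, Real.norm_eq_abs]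
      rw [abs_of_pos Real.pi_pos]
      have h2 : ‖(-2 : ℂ)‖ = 2 := by
        rw [show (-2 : ℂ) = -(2:ℂ) by norm_num, norm_neg, Complex.norm_two]
      rw [h2]; ring
    have habs1 : ∀ t : ℝ, ‖Complex.exp (c * t)‖ = 1 := by
      intro t
      rw [hcdef]
      rw [show ((-2 * (Real.pi:ℂ) * Complex.I * (n:ℂ)) * (t:ℂ))
          = ((-2 * Real.pi * (n:ℝ) * t : ℝ) : ℂ) * Complex.I by push_cast; ring]
      exact Complex.norm_exp_ofReal_mul_I _
    have hsubI : Set.uIcc δ (1-δ) ⊆ Set.Ioo (0:ℝ) 1 := by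
      rw [Set.uIcc_of_le hδ1]
      exact fun x hx => ⟨lt_of_lt_of_le hδ0 hx.1, lt_of_le_of_lt hx.2 (by linarith)⟩
    have hu : ∀ x ∈ Set.uIcc δ (1-δ), HasDerivAt (fun t : ℝ => (f t : ℂ)) ((φ x : ℂ)) x :=
      fun x hx => (hφd x (hsubI hx)).ofReal_comp
    have hv : ∀ x ∈ Set.uIcc δ (1-δ),
        HasDerivAt (fun t : ℝ => Complex.exp (c * t) / c) (Complex.exp (c * x)) x := by
      intro x _
      have h1 : HasDerivAt (fun t : ℝ => (t : ℂ)) 1 x := by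
        simpa using (hasDerivAt_id x).ofReal_comp
      have h2 : HasDerivAt (fun t : ℝ => c * (t : ℂ)) c x := by
        simpa using h1.const_mul c
      have h4 := h2.cexp.div_const c
      simpa [mul_div_cancel_right₀ _ hcne] using h4
    have hu' : IntervalIntegrable (fun t : ℝ => (φ t : ℂ)) volume δ (1-δ) := by
      have h0 := hφint δ (1-δ) hδ0 hδ1 (by linarith)
      rw [intervalIntegrable_iff] at h0 ⊢
      exact h0.ofReal
    have hv' : IntervalIntegrable (fun t : ℝ => Complex.exp (c * t)) volume δ (1-δ) :=
      (Complex.continuous_exp.comp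
        (continuous_const.mul Complex.continuous_ofReal)).intervalIntegrable _ _
    have hparts : (∫ t in δ..(1-δ), (f t : ℂ) * Complex.exp (c * t))
        = (f (1-δ) : ℂ) * (Complex.exp (c * ((1-δ:ℝ) : ℂ)) / c)
          - (f δ : ℂ) * (Complex.exp (c * (δ : ℂ)) / c)
          - ∫ t in δ..(1-δ), (φ t : ℂ) * (Complex.exp (c * t) / c) :=
      intervalIntegral.integral_mul_deriv_eq_deriv_mul (u := fun t => (f t : ℂ))
        (v := fun t => Complex.exp (c * t) / c) (u' := fun t => ((φ t : ℝ) : ℂ))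
        (v' := fun t => Complex.exp (c * t)) hu hv hu' hv'
    have hKA : 0 ≤ K / A := div_nonneg hK hA0.le
    have hP0 : 0 ≤ δ ^ (-A) := Real.rpow_nonneg hδ0.le _
    have hf1 : |f (1-δ)| ≤ B * δ ^ (-A) := by
      have h0 := hfb (1-δ) ⟨by linarith, by linarith⟩
      rwa [show (1:ℝ) - (1-δ) = δ by ring, min_eq_right hδ1] at h0
    have hf2 : |f δ| ≤ B * δ ^ (-A) := by
      have h0 := hfb δ ⟨hδ0, by linarith⟩
      rwa [min_eq_left (by linarith)] at h0
    have hnoX : ‖(f (1-δ) : ℂ) * (Complex.exp (c * ((1-δ:ℝ) : ℂ)) / c)‖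
        = |f (1-δ)| / (2*π*N) := by
      rw [norm_mul, norm_div, habs1, habsc,
        Complex.norm_real, Real.norm_eq_abs]
      ring
    have hnoY : ‖(f δ : ℂ) * (Complex.exp (c * (δ : ℂ)) / c)‖ = |f δ| / (2*π*N) := by
      rw [norm_mul, norm_div, habs1, habsc,
        Complex.norm_real, Real.norm_eq_abs]
      ring
    have hbint : ‖∫ t in δ..(1-δ), (φ t : ℂ) * (Complex.exp (c * t) / c)‖
        ≤ K * (2 * δ ^ (-A) / A) / (2*π*N) := by
      have hbae : ∀ᵐ t ∂(volume.restrict (Set.uIoc δ (1-δ))),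
          ‖(φ t : ℂ) * (Complex.exp (c * t) / c)‖
            ≤ K * (min t (1-t)) ^ (-1-A) / (2*π*N) := by
        refine (ae_restrict_iff' measurableSet_uIoc).2
          (Filter.Eventually.of_forall fun t ht => ?_)
        rw [Set.uIoc_of_le hδ1] at ht
        have ht' : t ∈ Set.Ioo (0:ℝ) 1 := ⟨lt_trans hδ0 ht.1, by linarith [ht.2]⟩
        have hno : ‖(φ t : ℂ) * (Complex.exp (c * t) / c)‖ = |φ t| / (2*π*N) := by
          rw [norm_mul, norm_div, habs1, habsc,
            Complex.norm_real, Real.norm_eq_abs]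
          ring
        rw [hno]
        gcongr
        exact hφb t ht'
      have hgi2 : IntervalIntegrable (fun t : ℝ => K * (min t (1-t)) ^ (-1-A) / (2*π*N))
          volume δ (1-δ) :=
        (((hgcont (-1-A)).mono hsubI).intervalIntegrable).div_const _
      have h := intervalIntegral.norm_integral_le_abs_of_norm_le hbae hgi2
      refine h.trans ?_
      rw [intervalIntegral.integral_div, abs_div, abs_of_pos hπN]
      gcongr
      -- remains: |∫ K * min^(-1-A)| ≤ K * (2 δ^(-A)/A)
      have hc1 : IntervalIntegrable (fun t : ℝ => K * (min t (1-t)) ^ (-1-A)) volume δ (1/2) := by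
        refine ((hgcont (-1-A)).mono ?_).intervalIntegrable
        rw [Set.uIcc_of_le hδh]
        exact fun x hx => ⟨lt_of_lt_of_le hδ0 hx.1, by linarith [hx.2]⟩
      have hc2 : IntervalIntegrable (fun t : ℝ => K * (min t (1-t)) ^ (-1-A))
          volume (1/2) (1-δ) := by
        refine ((hgcont (-1-A)).mono ?_).intervalIntegrable
        rw [Set.uIcc_of_le (by linarith)]
        exact fun x hx => ⟨by linarith [hx.1], by linarith [hx.2]⟩
      have hsplit2 : (∫ t in δ..(1-δ), K * (min t (1-t)) ^ (-1-A))
          = (∫ t in δ..(1/2:ℝ), K * (min t (1-t)) ^ (-1-A))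
            + ∫ t in (1/2:ℝ)..(1-δ), K * (min t (1-t)) ^ (-1-A) :=
        (intervalIntegral.integral_add_adjacent_intervals hc1 hc2).symm
      have hp1 : (∫ t in δ..(1/2:ℝ), K * (min t (1-t)) ^ (-1-A))
          = K * ∫ s in δ..(1/2:ℝ), s ^ (-1-A) := by
        rw [← intervalIntegral.integral_const_mul]
        refine intervalIntegral.integral_congr fun s hs => ?_
        rw [Set.uIcc_of_le hδh] at hs
        rw [min_eq_left (by linarith [hs.1, hs.2])]
      have hp2 : (∫ t in (1/2:ℝ)..(1-δ), K * (min t (1-t)) ^ (-1-A))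
          = K * ∫ s in δ..(1/2:ℝ), s ^ (-1-A) := by
        have he : (∫ t in (1/2:ℝ)..(1-δ), K * (min t (1-t)) ^ (-1-A))
            = ∫ t in (1/2:ℝ)..(1-δ), K * (1-t) ^ (-1-A) := by
          refine intervalIntegral.integral_congr fun s hs => ?_
          rw [Set.uIcc_of_le (by linarith)] at hs
          rw [min_eq_right (by linarith [hs.1, hs.2])]
        rw [he, ← intervalIntegral.integral_const_mul]
        have hcs := intervalIntegral.integral_comp_sub_left (a := (1/2:ℝ)) (b := 1-δ)
          (fun u : ℝ => K * u ^ (-1-A)) 1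
        rw [hcs, show (1:ℝ) - (1-δ) = δ by ring, show (1:ℝ) - 1/2 = 1/2 by norm_num]
      have hq := hrint δ hδ0 hδh
      rw [hsplit2, hp1, hp2]
      have h6 : (0:ℝ) ≤ K * ∫ s in δ..(1/2:ℝ), s ^ (-1-A) := mul_nonneg hK hq.1
      rw [abs_of_nonneg (by linarith : (0:ℝ) ≤ (K * ∫ s in δ..(1/2:ℝ), s ^ (-1-A))
        + K * ∫ s in δ..(1/2:ℝ), s ^ (-1-A))]
      calc (K * ∫ s in δ..(1/2:ℝ), s ^ (-1-A)) + K * ∫ s in δ..(1/2:ℝ), s ^ (-1-A)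
          = 2 * (K * ∫ s in δ..(1/2:ℝ), s ^ (-1-A)) := by ring
        _ ≤ 2 * (K * (δ ^ (-A) / A)) := by
            have h5 := mul_le_mul_of_nonneg_left hq.2 hK
            linarith
        _ = K * (2 * δ ^ (-A) / A) := by ring
    have hP2 : δ ^ (-A) ≤ 2 * N ^ A := by
      have e1 : δ ^ (-A) = (2*N) ^ A := by
        rw [hδdef, Real.inv_rpow (by positivity), Real.rpow_neg (by positivity), inv_inv]
      have e2 : (2*N) ^ A = 2 ^ A * N ^ A := Real.mul_rpow (by norm_num) hN0.le
      have e3 : (2:ℝ) ^ A ≤ 2 := by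
        calc (2:ℝ)^A ≤ 2^(1:ℝ) := Real.rpow_le_rpow_of_exponent_le one_le_two (by linarith)
          _ = 2 := Real.rpow_one 2
      rw [e1, e2]
      nlinarith [Real.rpow_nonneg hN0.le A]
    rw [hparts]
    calc ‖(f (1-δ) : ℂ) * (Complex.exp (c * ((1-δ:ℝ) : ℂ)) / c)
          - (f δ : ℂ) * (Complex.exp (c * (δ : ℂ)) / c)
          - ∫ t in δ..(1-δ), (φ t : ℂ) * (Complex.exp (c * t) / c)‖
        ≤ ‖(f (1-δ) : ℂ) * (Complex.exp (c * ((1-δ:ℝ) : ℂ)) / c)‖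
          + ‖(f δ : ℂ) * (Complex.exp (c * (δ : ℂ)) / c)‖
          + ‖∫ t in δ..(1-δ), (φ t : ℂ) * (Complex.exp (c * t) / c)‖ := by
          refine (norm_sub_le _ _).trans ?_
          gcongr
          exact norm_sub_le _ _
      _ ≤ B * δ ^ (-A) / (2*π*N) + B * δ ^ (-A) / (2*π*N)
            + K * (2 * δ ^ (-A) / A) / (2*π*N) := by
          refine add_le_add (add_le_add ?_ ?_) hbint
          · rw [hnoX]; gcongr
          · rw [hnoY]; gcongr
      _ = (B + K/A) * δ ^ (-A) / (π * N) := by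
          field_simp
          ring
      _ ≤ (B + K/A) * δ ^ (-A) / N := by
          refine div_le_div_of_nonneg_left
            (mul_nonneg (add_nonneg hB0 hKA) hP0) hN0 ?_
          nlinarith
      _ ≤ (B + K/A) * (2 * N ^ A) / N := by
          have h0 : (B + K/A) * δ ^ (-A) ≤ (B + K/A) * (2 * N ^ A) :=
            mul_le_mul_of_nonneg_left hP2 (add_nonneg hB0 hKA)
          gcongr
      _ = 2*(B + K/A) * N ^ (A-1) := by
          rw [show A - 1 = A + (-1) by ring, Real.rpow_add hN0, Real.rpow_neg_one]
          field_simp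
  calc ‖(∫ t in (0:ℝ)..δ,
        (f t : ℂ) * Complex.exp (-2 * Real.pi * Complex.I * n * t)) +
        ((∫ t in δ..(1-δ), (f t : ℂ) * Complex.exp (-2 * Real.pi * Complex.I * n * t)) +
         (∫ t in (1-δ)..1, (f t : ℂ) * Complex.exp (-2 * Real.pi * Complex.I * n * t)))‖
      ≤ ‖∫ t in (0:ℝ)..δ,
          (f t : ℂ) * Complex.exp (-2 * Real.pi * Complex.I * n * t)‖ +
        (‖∫ t in δ..(1-δ),
          (f t : ℂ) * Complex.exp (-2 * Real.pi * Complex.I * n * t)‖ +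
         ‖∫ t in (1-δ)..1,
          (f t : ℂ) * Complex.exp (-2 * Real.pi * Complex.I * n * t)‖) := by
        refine (norm_add_le _ _).trans ?_
        gcongr
        exact norm_add_le _ _
    _ ≤ B / (1-A) * N ^ (A-1) + (2*(B + K/A) * N ^ (A-1) + B / (1-A) * N ^ (A-1)) := by
        gcongr
    _ = (2*B/(1-A) + 2*(B + K/A)) * N ^ (A-1) := by ring
    _ = (2*B/(1-A) + 2*(B + K/A)) * N ^ (-1+A) := by rw [show A - 1 = -1 + A by ring]
end

section
/- Let f : [0,1] → ℝ be 1-periodic, differentiable on (0,1), with |f'(t)| ≤ K · min(t, 1-t)^{-1} for all t ∈ (0,1). Then there is a constant C (depending on K) such that |c_n| ≤ C · |n|^{-1} · log|n| for all integers n with |n| ≥ 2. -/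
open MeasureTheory intervalIntegral Real

private lemma neg_log_le (x : ℝ) (hx : 0 < x) : -Real.log x ≤ 2 * x ^ (-(1/2) : ℝ) := by
  have hy : 0 < x ^ (-(1/2) : ℝ) := Real.rpow_pos_of_pos hx _
  have hlog : Real.log (x ^ (-(1/2) : ℝ)) = -(1/2) * Real.log x := Real.log_rpow hx _
  have h := Real.log_le_sub_one_of_pos hy
  nlinarith

private lemma K_nonneg {K : ℝ} {f' : ℝ → ℝ}
    (hbound : ∀ t ∈ Set.Ioo (0:ℝ) 1, |f' t| ≤ K * (min t (1 - t)) ^ (-1 : ℝ)) :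
    0 ≤ K := by
  have h := hbound (1/2) (by norm_num)
  have h2 : ((1:ℝ)/2) ^ (-1:ℝ) = 2 := by
    rw [Real.rpow_neg_one]; norm_num
  rw [show min ((1:ℝ)/2) (1 - 1/2) = 1/2 by norm_num, h2] at h
  nlinarith [abs_nonneg (f' (1/2))]

private lemma f'_ii {K : ℝ} {f f' : ℝ → ℝ}
    (hderiv : ∀ t ∈ Set.Ioo (0:ℝ) 1, HasDerivAt f (f' t) t)
    (hbound : ∀ t ∈ Set.Ioo (0:ℝ) 1, |f' t| ≤ K * (min t (1 - t)) ^ (-1 : ℝ))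
    {a b : ℝ} (ha : 0 < a) (hab : a ≤ b) (hb : b < 1) :
    IntervalIntegrable f' volume a b := by
  have hK : 0 ≤ K := K_nonneg hbound
  have hsub : Set.uIoc a b ⊆ Set.Ioo 0 1 := by
    rw [Set.uIoc_of_le hab]
    exact fun x hx => ⟨ha.trans hx.1, lt_of_le_of_lt hx.2 hb⟩
  rw [intervalIntegrable_iff]
  have hmeas : AEStronglyMeasurable f' (volume.restrict (Set.uIoc a b)) := by
    refine ((measurable_deriv f).aestronglyMeasurable.restrict).congr ?_
    filter_upwards [ae_restrict_mem measurableSet_uIoc] with x hx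
    exact (hderiv x (hsub hx)).deriv
  have hm : 0 < min a (1 - b) := lt_min ha (by linarith)
  refine Integrable.mono' (g := fun _ => K * (min a (1 - b))⁻¹)
    (integrableOn_const ?_) hmeas ?_
  · rw [Set.uIoc_of_le hab]; exact measure_Ioc_lt_top.ne
  · filter_upwards [ae_restrict_mem measurableSet_uIoc] with x hx
    have hx' := hsub hx
    rw [Set.uIoc_of_le hab] at hx
    have h2 : min a (1 - b) ≤ min x (1 - x) :=
      le_min ((min_le_left _ _).trans hx.1.le) ((min_le_right _ _).trans (by linarith [hx.2]))
    have h := hbound x hx'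
    rw [Real.rpow_neg_one] at h
    have h3 : (min x (1-x))⁻¹ ≤ (min a (1-b))⁻¹ := by
      apply inv_anti₀ hm h2
    calc ‖f' x‖ = |f' x| := rfl
      _ ≤ K * (min x (1-x))⁻¹ := h
      _ ≤ K * (min a (1-b))⁻¹ := by gcongr

private lemma f_bound_left {K : ℝ} {f f' : ℝ → ℝ}
    (hderiv : ∀ t ∈ Set.Ioo (0:ℝ) 1, HasDerivAt f (f' t) t)
    (hbound : ∀ t ∈ Set.Ioo (0:ℝ) 1, |f' t| ≤ K * (min t (1 - t)) ^ (-1 : ℝ))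
    {t : ℝ} (ht0 : 0 < t) (ht : t ≤ 1/2) :
    |f t| ≤ |f (1/2)| + K * (-Real.log t) := by
  have hK : 0 ≤ K := K_nonneg hbound
  have hint : IntervalIntegrable f' volume t (1/2) :=
    f'_ii hderiv hbound ht0 ht (by norm_num)
  have hftc : ∫ s in t..(1/2:ℝ), f' s = f (1/2) - f t := by
    refine integral_eq_sub_of_hasDerivAt (fun x hx => ?_) hint
    rw [Set.uIcc_of_le ht] at hx
    exact hderiv x ⟨ht0.trans_le hx.1, by linarith [hx.2]⟩
  have hii2 : IntervalIntegrable (fun s => K * s⁻¹) volume t (1/2) := by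
    apply ContinuousOn.intervalIntegrable
    apply continuousOn_const.mul
    apply ContinuousOn.inv₀ continuousOn_id
    intro x hx
    rw [Set.uIcc_of_le ht] at hx
    exact ne_of_gt (ht0.trans_le hx.1)
  have habs : |∫ s in t..(1/2:ℝ), f' s| ≤ ∫ s in t..(1/2:ℝ), K * s⁻¹ := by
    refine (intervalIntegral.abs_integral_le_integral_abs ht).trans ?_
    refine intervalIntegral.integral_mono_on ht hint.abs hii2 (fun x hx => ?_)
    have hx0 : 0 < x := ht0.trans_le hx.1
    have h := hbound x ⟨hx0, by linarith [hx.2]⟩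
    rwa [min_eq_left (by linarith [hx.2]), Real.rpow_neg_one] at h
  have hval : ∫ s in t..(1/2:ℝ), K * s⁻¹ = K * Real.log ((1/2)/t) := by
    rw [intervalIntegral.integral_const_mul, integral_inv]
    rw [Set.uIcc_of_le ht]
    exact fun h => absurd h.1 (by simp [ht0])
  have hlog : Real.log ((1/2)/t) ≤ -Real.log t := by
    rw [Real.log_div (by norm_num) (ne_of_gt ht0)]
    have : Real.log (1/2) ≤ 0 := Real.log_nonpos (by norm_num) (by norm_num)
    linarith
  have h0 : |f t| ≤ |f (1/2)| + |∫ s in t..(1/2:ℝ), f' s| := by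
    rw [hftc]
    have := abs_sub_abs_le_abs_sub (f t) (f (1/2))
    rw [abs_sub_comm] at this
    linarith
  have : K * Real.log ((1/2)/t) ≤ K * (-Real.log t) := by gcongr
  linarith

private lemma f_bound_right {K : ℝ} {f f' : ℝ → ℝ}
    (hderiv : ∀ t ∈ Set.Ioo (0:ℝ) 1, HasDerivAt f (f' t) t)
    (hbound : ∀ t ∈ Set.Ioo (0:ℝ) 1, |f' t| ≤ K * (min t (1 - t)) ^ (-1 : ℝ))
    {t : ℝ} (ht : 1/2 ≤ t) (ht1 : t < 1) :
    |f t| ≤ |f (1/2)| + K * (-Real.log (1 - t)) := by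
  have hK : 0 ≤ K := K_nonneg hbound
  have hint : IntervalIntegrable f' volume (1/2) t :=
    f'_ii hderiv hbound (by norm_num) ht ht1
  have hftc : ∫ s in (1/2:ℝ)..t, f' s = f t - f (1/2) := by
    refine integral_eq_sub_of_hasDerivAt (fun x hx => ?_) hint
    rw [Set.uIcc_of_le ht] at hx
    exact hderiv x ⟨by linarith [hx.1], lt_of_le_of_lt hx.2 ht1⟩
  have hii2 : IntervalIntegrable (fun s => K * (1 - s)⁻¹) volume (1/2) t := by
    apply ContinuousOn.intervalIntegrable
    apply continuousOn_const.mul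
    apply ContinuousOn.inv₀ (by fun_prop)
    intro x hx
    rw [Set.uIcc_of_le ht] at hx
    have : x < 1 := lt_of_le_of_lt hx.2 ht1
    intro hc; linarith [sub_eq_zero.mp hc]
  have habs : |∫ s in (1/2:ℝ)..t, f' s| ≤ ∫ s in (1/2:ℝ)..t, K * (1 - s)⁻¹ := by
    refine (intervalIntegral.abs_integral_le_integral_abs ht).trans ?_
    refine intervalIntegral.integral_mono_on ht hint.abs hii2 (fun x hx => ?_)
    have hx1 : x < 1 := lt_of_le_of_lt hx.2 ht1
    have h := hbound x ⟨by linarith [hx.1], hx1⟩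
    rwa [min_eq_right (by linarith [hx.1]), Real.rpow_neg_one] at h
  have hval : ∫ s in (1/2:ℝ)..t, K * (1 - s)⁻¹ = K * Real.log ((1/2)/(1 - t)) := by
    rw [intervalIntegral.integral_const_mul]
    have hcomp : ∫ s in (1/2:ℝ)..t, (1 - s)⁻¹ = ∫ y in (1-t)..(1-(1/2:ℝ)), y⁻¹ := by
      simpa using intervalIntegral.integral_comp_sub_left (a := (1/2:ℝ)) (b := t) (fun y => y⁻¹) 1
    rw [hcomp, integral_inv]
    · norm_num
    · rw [Set.uIcc_of_le (by linarith)]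
      exact fun h => absurd h.1 (by simp; linarith)
  have hlog : Real.log ((1/2)/(1-t)) ≤ -Real.log (1-t) := by
    rw [Real.log_div (by norm_num) (by intro hc; linarith [sub_eq_zero.mp hc])]
    have : Real.log (1/2) ≤ 0 := Real.log_nonpos (by norm_num) (by norm_num)
    linarith
  have h0 : |f t| ≤ |f (1/2)| + |∫ s in (1/2:ℝ)..t, f' s| := by
    rw [hftc]
    have := abs_sub_abs_le_abs_sub (f t) (f (1/2))
    linarith
  have : K * Real.log ((1/2)/(1-t)) ≤ K * (-Real.log (1-t)) := by gcongr
  linarith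


set_option maxHeartbeats 1600000 in
theorem stmt_4 (K : ℝ)
    (f f' : ℝ → ℝ) (hper : Function.Periodic f 1)
    (hderiv : ∀ t ∈ Set.Ioo (0:ℝ) 1, HasDerivAt f (f' t) t)
    (hbound : ∀ t ∈ Set.Ioo (0:ℝ) 1, |f' t| ≤ K * (min t (1 - t)) ^ (-1 : ℝ))
    (hL2 : MemLp f 2 (MeasureTheory.volume.restrict (Set.Icc (0:ℝ) 1))) :
    ∃ C : ℝ, ∀ n : ℤ, 2 ≤ |n| →
      ‖∫ t in (0:ℝ)..1, (f t : ℂ) * Complex.exp (-2 * Real.pi * Complex.I * n * t)‖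
        ≤ C * |(n : ℝ)|⁻¹ * Real.log |(n : ℝ)| := by
  have hK : 0 ≤ K := K_nonneg hbound
  set A := |f (1/2)| with hA_def
  have hA : 0 ≤ A := abs_nonneg _
  refine ⟨100 * (A + K + 1), fun n hn => ?_⟩
  set N : ℝ := |(n:ℝ)| with hN_def
  have hN2 : (2:ℝ) ≤ N := by
    rw [hN_def, ← Int.cast_abs]; exact_mod_cast hn
  have hN0 : (0:ℝ) < N := by linarith
  have hn0 : (n:ℂ) ≠ 0 := by
    have : n ≠ 0 := by
      intro h; rw [h] at hn; simp at hn
    exact_mod_cast this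
  set ε : ℝ := N⁻¹ with hε_def
  have hε0 : 0 < ε := inv_pos.2 hN0
  have hε2 : ε ≤ 1/2 := by
    rw [hε_def]
    rw [inv_le_comm₀ (by positivity) (by norm_num)]
    simpa using hN2
  have hεε : ε ≤ 1 - ε := by linarith
  have hlog2 : (0.6:ℝ) < Real.log 2 := by
    have := Real.log_two_gt_d9; linarith
  have hlogN : Real.log 2 ≤ Real.log N := Real.log_le_log (by norm_num) hN2
  have hlogN0 : 0 < Real.log N := by linarith
  have h1le : 1 ≤ 2 * Real.log N := by linarith
  set c : ℂ := -2 * Real.pi * Complex.I * (n:ℂ) with hc_def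
  have hc0 : c ≠ 0 := by
    simp only [hc_def]
    refine mul_ne_zero (mul_ne_zero (mul_ne_zero ?_ ?_) Complex.I_ne_zero) hn0
    · norm_num
    · exact_mod_cast Real.pi_ne_zero
  have habsc : ‖c‖ = 2 * Real.pi * N := by
    simp [hc_def, Complex.norm_intCast, abs_of_pos Real.pi_pos, hN_def]
  have habsE : ∀ t : ℝ, ‖Complex.exp (c * t)‖ = 1 := by
    intro t
    have h : c * (t:ℂ) = ((-2 * Real.pi * n * t : ℝ) : ℂ) * Complex.I := by
      rw [hc_def]; push_cast; ring
    rw [h, Complex.norm_exp_ofReal_mul_I]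
  -- integrability of f
  haveI : IsFiniteMeasure (volume.restrict (Set.Icc (0:ℝ) 1)) :=
    ⟨by rw [Measure.restrict_apply_univ]; exact measure_Icc_lt_top⟩
  have hf_int : IntegrableOn f (Set.Icc (0:ℝ) 1) := hL2.integrable (by norm_num)
  set F : ℝ → ℂ := fun t => (f t : ℂ) * Complex.exp (c * t) with hF_def
  have hnormF : ∀ t : ℝ, ‖F t‖ = |f t| := by
    intro t
    rw [hF_def]
    simp only [norm_mul, Complex.norm_real, Real.norm_eq_abs, habsE, mul_one]
  have hF_meas : AEStronglyMeasurable F (volume.restrict (Set.Icc (0:ℝ) 1)) := by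
    apply AEStronglyMeasurable.mul
    · exact Complex.continuous_ofReal.comp_aestronglyMeasurable hf_int.aestronglyMeasurable
    · exact ((Complex.continuous_exp.comp (continuous_const.mul Complex.continuous_ofReal))).aestronglyMeasurable
  have hF_ii : ∀ a b : ℝ, 0 ≤ a → a ≤ b → b ≤ 1 → IntervalIntegrable F volume a b := by
    intro a b ha hab hb
    rw [intervalIntegrable_iff, Set.uIoc_of_le hab]
    have hsub : Set.Ioc a b ⊆ Set.Icc 0 1 := fun x hx => ⟨ha.trans hx.1.le, hx.2.trans hb⟩
    refine Integrable.mono' ((hf_int.mono_set hsub).abs)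
      (hF_meas.mono_measure (Measure.restrict_mono hsub le_rfl)) ?_
    exact Filter.Eventually.of_forall fun x => (hnormF x).le

  -- split the integral
  have e1 : (∫ t in (0:ℝ)..ε, F t) + ∫ t in ε..1, F t = ∫ t in (0:ℝ)..1, F t :=
    integral_add_adjacent_intervals (hF_ii 0 ε le_rfl hε0.le (by linarith))
      (hF_ii ε 1 hε0.le (by linarith) le_rfl)
  have e2 : (∫ t in ε..(1-ε), F t) + ∫ t in (1-ε)..1, F t = ∫ t in ε..1, F t :=
    integral_add_adjacent_intervals (hF_ii ε (1-ε) hε0.le hεε (by linarith))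
      (hF_ii (1-ε) 1 (by linarith) (by linarith) le_rfl)
  have hstmt : (∫ t in (0:ℝ)..1, (f t : ℂ) * Complex.exp (-2 * Real.pi * Complex.I * n * t))
      = ∫ t in (0:ℝ)..1, F t := by
    refine intervalIntegral.integral_congr fun t _ => ?_
    rw [hF_def]
  -- the bounding function for the tails
  set B : ℝ := A + K * Real.log N with hB_def
  have hB0 : 0 ≤ B := by
    rw [hB_def]; positivity
  set φ : ℝ → ℝ := fun t => B + (2 * K * N ^ (-(1/2):ℝ)) * t ^ (-(1/2):ℝ) with hφ_def
  have hφ_ii : ∀ a b : ℝ, IntervalIntegrable φ volume a b := by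
    intro a b
    exact intervalIntegrable_const.add ((intervalIntegrable_rpow' (by norm_num)).const_mul _)
  have hf_le_φ : ∀ t ∈ Set.Ioc (0:ℝ) ε, |f t| ≤ φ t := by
    intro t ht
    have h1 := f_bound_left hderiv hbound ht.1 (ht.2.trans hε2)
    have h2 : -Real.log t ≤ Real.log N + 2 * ((N*t) ^ (-(1/2):ℝ)) := by
      have hneg := neg_log_le (N*t) (mul_pos hN0 ht.1)
      have hlogmul : Real.log (N*t) = Real.log N + Real.log t :=
        Real.log_mul (ne_of_gt hN0) (ne_of_gt ht.1)
      linarith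
    have h3 : (N*t) ^ (-(1/2):ℝ) = N ^ (-(1/2):ℝ) * t ^ (-(1/2):ℝ) :=
      Real.mul_rpow hN0.le ht.1.le
    rw [h3] at h2
    have h4 : K * (-Real.log t) ≤ K * (Real.log N + 2 * (N ^ (-(1/2):ℝ) * t ^ (-(1/2):ℝ))) := by
      gcongr
    rw [hφ_def, hB_def, hA_def]
    have := h1
    rw [← hA_def] at this
    calc |f t| ≤ A + K * (-Real.log t) := this
      _ ≤ A + K * (Real.log N + 2 * (N ^ (-(1/2):ℝ) * t ^ (-(1/2):ℝ))) := by linarith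
      _ = A + K * Real.log N + 2 * K * N ^ (-(1/2):ℝ) * t ^ (-(1/2):ℝ) := by ring
  -- value of the tail integral
  have hεhalf : ε ^ ((1/2):ℝ) = N ^ (-(1/2):ℝ) := by
    rw [hε_def, ← Real.rpow_neg_one, ← Real.rpow_mul hN0.le]
    norm_num
  have hNN : N ^ (-(1/2):ℝ) * N ^ (-(1/2):ℝ) = ε := by
    rw [← Real.rpow_add hN0, hε_def]
    norm_num
    exact Real.rpow_neg_one N
  have hφ_val : ∫ t in (0:ℝ)..ε, φ t = B * ε + 4 * K * ε := by
    rw [hφ_def]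
    rw [intervalIntegral.integral_add intervalIntegrable_const
      ((intervalIntegrable_rpow' (by norm_num)).const_mul _)]
    rw [intervalIntegral.integral_const, intervalIntegral.integral_const_mul]
    rw [integral_rpow (Or.inl (by norm_num))]
    rw [Real.zero_rpow (by norm_num)]
    rw [show (-(1/2):ℝ) + 1 = 1/2 by norm_num]
    rw [hεhalf]
    rw [smul_eq_mul]
    field_simp
    nlinarith [hNN]

  -- Tail 1
  have hT1 : ‖∫ t in (0:ℝ)..ε, F t‖ ≤ B * ε + 4 * K * ε := by
    have hb : ∀ᵐ t ∂volume.restrict (Set.uIoc 0 ε), ‖F t‖ ≤ φ t := by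
      rw [Set.uIoc_of_le hε0.le]
      filter_upwards [ae_restrict_mem measurableSet_Ioc] with t ht
      rw [hnormF]
      exact hf_le_φ t ht
    refine (intervalIntegral.norm_integral_le_abs_of_norm_le hb (hφ_ii 0 ε)).trans ?_
    rw [hφ_val, abs_of_nonneg (by positivity)]
  -- Tail 3
  have hf_le_φ' : ∀ t ∈ Set.Ioo (1-ε) 1, |f t| ≤ φ (1 - t) := by
    intro t ht
    have h10 : 0 < 1 - t := by linarith [ht.2]
    have h1 : |f t| ≤ |f (1/2)| + K * (-Real.log (1-t)) :=
      f_bound_right hderiv hbound (by linarith [ht.1]) ht.2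
    have h2 : -Real.log (1-t) ≤ Real.log N + 2 * ((N*(1-t)) ^ (-(1/2):ℝ)) := by
      have hneg := neg_log_le (N*(1-t)) (mul_pos hN0 h10)
      have hlogmul : Real.log (N*(1-t)) = Real.log N + Real.log (1-t) :=
        Real.log_mul (ne_of_gt hN0) (ne_of_gt h10)
      linarith
    have h3 : (N*(1-t)) ^ (-(1/2):ℝ) = N ^ (-(1/2):ℝ) * (1-t) ^ (-(1/2):ℝ) :=
      Real.mul_rpow hN0.le h10.le
    rw [h3] at h2
    have h4 : K * (-Real.log (1-t)) ≤ K * (Real.log N + 2 * (N ^ (-(1/2):ℝ) * (1-t) ^ (-(1/2):ℝ))) := by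
      gcongr
    rw [hφ_def, hB_def]
    rw [← hA_def] at h1
    calc |f t| ≤ A + K * (-Real.log (1-t)) := h1
      _ ≤ A + K * (Real.log N + 2 * (N ^ (-(1/2):ℝ) * (1-t) ^ (-(1/2):ℝ))) := by linarith
      _ = A + K * Real.log N + 2 * K * N ^ (-(1/2):ℝ) * (1-t) ^ (-(1/2):ℝ) := by ring
  have hT3 : ‖∫ t in (1-ε)..1, F t‖ ≤ B * ε + 4 * K * ε := by
    have hφc_ii : IntervalIntegrable (fun t => φ (1 - t)) volume (1-ε) 1 := by
      have := (hφ_ii 0 ε).comp_sub_left 1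
      simpa using this.symm
    have hone : ∀ᵐ (t:ℝ) ∂volume.restrict (Set.uIoc (1-ε) 1), t ≠ 1 := by
      refine ae_restrict_of_ae ?_
      rw [MeasureTheory.ae_iff]
      have : {t : ℝ | ¬ t ≠ 1} = {1} := by ext x; simp
      rw [this]
      exact Real.volume_singleton
    have hb : ∀ᵐ t ∂volume.restrict (Set.uIoc (1-ε) 1), ‖F t‖ ≤ φ (1-t) := by
      rw [Set.uIoc_of_le (by linarith : 1-ε ≤ 1)]
      rw [Set.uIoc_of_le (by linarith : 1-ε ≤ 1)] at hone
      filter_upwards [ae_restrict_mem measurableSet_Ioc, hone] with t ht hne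
      rw [hnormF]
      exact hf_le_φ' t ⟨ht.1, lt_of_le_of_ne ht.2 hne⟩
    refine (intervalIntegral.norm_integral_le_abs_of_norm_le hb hφc_ii).trans ?_
    have hcomp : ∫ t in (1-ε)..1, φ (1-t) = ∫ t in (0:ℝ)..ε, φ t := by
      simpa using intervalIntegral.integral_comp_sub_left (a := 1-ε) (b := 1) φ 1
    rw [hcomp, hφ_val, abs_of_nonneg (by positivity)]
  -- Middle: integration by parts
  set u : ℝ → ℂ := fun t => ((f t : ℝ) : ℂ) with hu_def
  set u' : ℝ → ℂ := fun t => ((f' t : ℝ) : ℂ) with hu'_def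
  set v : ℝ → ℂ := fun t => c⁻¹ * Complex.exp (c * t) with hv_def
  have hIcc_sub : Set.Icc ε (1-ε) ⊆ Set.Ioo 0 1 :=
    fun x hx => ⟨hε0.trans_le hx.1, lt_of_le_of_lt hx.2 (by linarith)⟩
  have hu : ∀ x ∈ Set.uIcc ε (1-ε), HasDerivAt u (u' x) x := by
    intro x hx
    rw [Set.uIcc_of_le hεε] at hx
    exact (hderiv x (hIcc_sub hx)).ofReal_comp
  have hv : ∀ x ∈ Set.uIcc ε (1-ε), HasDerivAt v (Complex.exp (c * x)) x := by
    intro x _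
    have h1 : HasDerivAt (fun t : ℝ => c * (t:ℂ)) c x := by
      simpa using (Complex.ofRealCLM.hasDerivAt (x := x)).const_mul c
    have h2 := (h1.cexp).const_mul c⁻¹
    exact h2.congr_deriv (by rw [mul_comm (Complex.exp _) c, ← mul_assoc, inv_mul_cancel₀ hc0, one_mul])
  have hu'_ii : IntervalIntegrable u' volume ε (1-ε) := by
    have hr := f'_ii hderiv hbound hε0 hεε (by linarith)
    rw [intervalIntegrable_iff] at hr ⊢
    exact hr.ofReal
  have hv'_ii : IntervalIntegrable (fun t : ℝ => Complex.exp (c * t)) volume ε (1-ε) :=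
    ((Complex.continuous_exp.comp (continuous_const.mul Complex.continuous_ofReal)).intervalIntegrable _ _)
  have hparts0 := intervalIntegral.integral_mul_deriv_eq_deriv_mul (u := u) (v := v)
    (u' := u') (v' := fun x : ℝ => Complex.exp (c * x)) (a := ε) (b := 1-ε) hu hv hu'_ii hv'_ii
  have hparts : ∫ t in ε..(1-ε), F t
      = u (1-ε) * v (1-ε) - u ε * v ε - ∫ x in ε..(1-ε), u' x * v x := by
    rw [← hparts0]

  have hpi : (1:ℝ) ≤ 2 * Real.pi := by nlinarith [Real.pi_gt_three]
  have hvabs : ∀ t : ℝ, ‖v t‖ = (2 * Real.pi * N)⁻¹ := by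
    intro t
    rw [hv_def]
    simp only [norm_mul, norm_inv, habsc, habsE, mul_one]
  have hinv_le : (2 * Real.pi * N)⁻¹ ≤ ε := by
    rw [hε_def]
    apply inv_anti₀ hN0
    nlinarith
  have hboundary : ∀ t : ℝ, 0 < t → t ≤ 1/2 → |f t| ≤ A + K * Real.log N → True := fun _ _ _ _ => trivial
  have hbdry : ∀ t : ℝ, |f t| ≤ A + K * Real.log N → ‖u t * v t‖ ≤ B * ε := by
    intro t hft
    rw [norm_mul, hvabs]
    have h1 : ‖u t‖ = |f t| := by
      rw [hu_def]; exact Complex.norm_real _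
    rw [h1, hB_def]
    have h2 : 0 ≤ (2 * Real.pi * N)⁻¹ := by positivity
    calc |f t| * (2 * Real.pi * N)⁻¹ ≤ (A + K * Real.log N) * (2 * Real.pi * N)⁻¹ := by
          exact mul_le_mul_of_nonneg_right hft h2
      _ ≤ (A + K * Real.log N) * ε := by
          apply mul_le_mul_of_nonneg_left hinv_le (by positivity)
  have hlogε : -Real.log ε = Real.log N := by
    rw [hε_def, Real.log_inv]; ring
  have hbε : ‖u ε * v ε‖ ≤ B * ε := by
    apply hbdry
    have := f_bound_left hderiv hbound hε0 hε2
    rw [← hA_def, hlogε] at this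
    exact this
  have hb1ε : ‖u (1-ε) * v (1-ε)‖ ≤ B * ε := by
    apply hbdry
    have := f_bound_right hderiv hbound (by linarith : 1/2 ≤ 1-ε) (by linarith : 1-ε < 1)
    rw [← hA_def, show 1 - (1-ε) = ε by ring, hlogε] at this
    exact this
  -- bound on the integral of u' * v
  have hMidInt : ‖∫ x in ε..(1-ε), u' x * v x‖ ≤ 2 * K * ε * Real.log N := by
    set ψ : ℝ → ℝ := fun t => (K * ε) * (t⁻¹ + (1-t)⁻¹) with hψ_def
    have hψ_ii : IntervalIntegrable ψ volume ε (1-ε) := by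
      apply ContinuousOn.intervalIntegrable
      apply continuousOn_const.mul
      apply ContinuousOn.add
      · apply ContinuousOn.inv₀ continuousOn_id
        intro x hx
        rw [Set.uIcc_of_le hεε] at hx
        exact ne_of_gt (hε0.trans_le hx.1)
      · apply ContinuousOn.inv₀ (by fun_prop)
        intro x hx
        rw [Set.uIcc_of_le hεε] at hx
        have : x < 1 := lt_of_le_of_lt hx.2 (by linarith)
        intro hc; linarith [sub_eq_zero.mp hc]
    have hb : ∀ᵐ t ∂volume.restrict (Set.uIoc ε (1-ε)), ‖u' t * v t‖ ≤ ψ t := by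
      filter_upwards [ae_restrict_mem measurableSet_uIoc] with t ht
      rw [Set.uIoc_of_le hεε] at ht
      have ht0 : 0 < t := hε0.trans ht.1
      have ht1 : t < 1 := lt_of_le_of_lt ht.2 (by linarith)
      have hmem : t ∈ Set.Ioo (0:ℝ) 1 := ⟨ht0, ht1⟩
      have h1 : ‖u' t * v t‖ = |f' t| * (2 * Real.pi * N)⁻¹ := by
        rw [norm_mul, hvabs t]
        congr 1
        exact Complex.norm_real _
      rw [h1, hψ_def]
      have h2 := hbound t hmem
      rw [Real.rpow_neg_one] at h2
      have hmin : (min t (1-t))⁻¹ ≤ t⁻¹ + (1-t)⁻¹ := by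
        rcases min_cases t (1-t) with ⟨hm, _⟩ | ⟨hm, _⟩ <;> rw [hm]
        · have : (0:ℝ) ≤ (1-t)⁻¹ := inv_nonneg.2 (by linarith)
          linarith
        · have : (0:ℝ) ≤ t⁻¹ := inv_nonneg.2 ht0.le
          linarith
      have h3 : |f' t| ≤ K * (t⁻¹ + (1-t)⁻¹) := h2.trans (by gcongr)
      have h2πN : (0:ℝ) ≤ (2 * Real.pi * N)⁻¹ := by
        apply inv_nonneg.2; nlinarith [Real.pi_pos]
      calc |f' t| * (2 * Real.pi * N)⁻¹ ≤ (K * (t⁻¹ + (1-t)⁻¹)) * (2 * Real.pi * N)⁻¹ := by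
            exact mul_le_mul_of_nonneg_right h3 h2πN
        _ ≤ (K * (t⁻¹ + (1-t)⁻¹)) * ε := by
            have h4 : 0 ≤ K * (t⁻¹ + (1-t)⁻¹) := le_trans (abs_nonneg _) h3
            exact mul_le_mul_of_nonneg_left hinv_le h4
        _ = K * ε * (t⁻¹ + (1-t)⁻¹) := by ring
    refine (intervalIntegral.norm_integral_le_abs_of_norm_le hb hψ_ii).trans ?_
    have hval : ∫ t in ε..(1-ε), ψ t = (K * ε) * (2 * Real.log ((1-ε)/ε)) := by
      rw [hψ_def, intervalIntegral.integral_const_mul]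
      have h0 : (0:ℝ) ∉ Set.uIcc ε (1-ε) := by
        rw [Set.uIcc_of_le hεε]
        intro h
        exact absurd h.1 (by simp [hε0])
      have hi1 : IntervalIntegrable (fun t : ℝ => t⁻¹) volume ε (1-ε) := by
        apply ContinuousOn.intervalIntegrable
        apply ContinuousOn.inv₀ continuousOn_id
        intro x hx
        rw [Set.uIcc_of_le hεε] at hx
        exact ne_of_gt (hε0.trans_le hx.1)
      have hi2 : IntervalIntegrable (fun t : ℝ => (1-t)⁻¹) volume ε (1-ε) := by
        apply ContinuousOn.intervalIntegrable
        apply ContinuousOn.inv₀ (by fun_prop)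
        intro x hx
        rw [Set.uIcc_of_le hεε] at hx
        have : x < 1 := lt_of_le_of_lt hx.2 (by linarith)
        intro hc; linarith [sub_eq_zero.mp hc]
      rw [intervalIntegral.integral_add hi1 hi2]
      rw [integral_inv h0]
      have hcomp : ∫ t in ε..(1-ε), (1-t)⁻¹ = ∫ y in ε..(1-ε), y⁻¹ := by
        have := intervalIntegral.integral_comp_sub_left (a := ε) (b := 1-ε) (fun y => y⁻¹) 1
        simpa using this
      rw [hcomp, integral_inv h0]
      ring
    rw [hval]
    have hlog1 : Real.log ((1-ε)/ε) ≤ Real.log N := by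
      apply Real.log_le_log (div_pos (by linarith) hε0)
      rw [div_le_iff₀ hε0, hε_def]
      have : N⁻¹ * N = 1 := inv_mul_cancel₀ (ne_of_gt hN0)
      nlinarith
    have hlog0 : 0 ≤ Real.log ((1-ε)/ε) := by
      apply Real.log_nonneg
      rw [le_div_iff₀ hε0]
      linarith
    rw [abs_of_nonneg (by positivity)]
    have hKε : (0:ℝ) ≤ K * ε := mul_nonneg hK hε0.le
    have := mul_le_mul_of_nonneg_left hlog1 hKε
    nlinarith
  -- Middle bound
  have hT2 : ‖∫ t in ε..(1-ε), F t‖ ≤ 2 * B * ε + 2 * K * ε * Real.log N := by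
    rw [hparts]
    calc ‖u (1-ε) * v (1-ε) - u ε * v ε - ∫ x in ε..(1-ε), u' x * v x‖
        ≤ ‖u (1-ε) * v (1-ε) - u ε * v ε‖ + ‖∫ x in ε..(1-ε), u' x * v x‖ := norm_sub_le _ _
      _ ≤ ‖u (1-ε) * v (1-ε)‖ + ‖u ε * v ε‖ + ‖∫ x in ε..(1-ε), u' x * v x‖ := by
          have := norm_sub_le (u (1-ε) * v (1-ε)) (u ε * v ε)
          linarith
      _ ≤ B * ε + B * ε + 2 * K * ε * Real.log N := by
          have e1 : ‖u (1-ε) * v (1-ε)‖ = ‖u (1-ε) * v (1-ε)‖ := rfl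
          have e2 : ‖u ε * v ε‖ = ‖u ε * v ε‖ := rfl
          rw [e1, e2]
          linarith [hb1ε, hbε, hMidInt]
      _ = 2 * B * ε + 2 * K * ε * Real.log N := by ring
  -- final assembly
  rw [show ‖∫ t in (0:ℝ)..1, (f t : ℂ)
      * Complex.exp (-2 * Real.pi * Complex.I * n * t)‖
    = ‖∫ t in (0:ℝ)..1, F t‖ by rw [← hstmt]]
  have hsplit : ‖∫ t in (0:ℝ)..1, F t‖
      ≤ ‖∫ t in (0:ℝ)..ε, F t‖ + ‖∫ t in ε..(1-ε), F t‖ + ‖∫ t in (1-ε)..1, F t‖ := by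
    rw [← e1, ← e2]
    calc ‖(∫ t in (0:ℝ)..ε, F t) + ((∫ t in ε..(1-ε), F t) + ∫ t in (1-ε)..1, F t)‖
        ≤ ‖∫ t in (0:ℝ)..ε, F t‖ + ‖(∫ t in ε..(1-ε), F t) + ∫ t in (1-ε)..1, F t‖ :=
          norm_add_le _ _
      _ ≤ _ := by
          have := norm_add_le (∫ t in ε..(1-ε), F t) (∫ t in (1-ε)..1, F t)
          linarith
  have htotal : ‖∫ t in (0:ℝ)..1, F t‖ ≤ 4*B*ε + 8*K*ε + 2*K*ε*Real.log N := by
    linarith [hT1, hT2, hT3, hsplit]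
  refine htotal.trans ?_
  have h : 4*B + 8*K + 2*K*Real.log N ≤ 100*(A+K+1)*Real.log N := by
    rw [hB_def]
    nlinarith
  calc 4*B*ε + 8*K*ε + 2*K*ε*Real.log N = (4*B + 8*K + 2*K*Real.log N) * ε := by ring
    _ ≤ (100*(A+K+1)*Real.log N) * ε := mul_le_mul_of_nonneg_right h hε0.le
    _ = 100 * (A + K + 1) * ε * Real.log N := by ring
end

section
/- Let s ≥ 1, and suppose σ²_ℓ ≤ C · 2^{(2A−1)|ℓ|} for all ℓ ∈ ℕ₀^s, where |ℓ| = ℓ_1 + ⋯ + ℓ_s and −1/2 < A < 1/2. Suppose also the gain coefficients satisfy Γ_ℓ ≤ G for all ℓ (uniformly bounded). Then for N = 2^m, (1/N) Σ_{ℓ ∈ ℕ₀^s} Γ_ℓ σ²_ℓ 𝟙{|ℓ| ≥ m} + (1/N) Σ_{|ℓ| < m} Γ_ℓ σ²_ℓ, with Γ_ℓ = 0 for |ℓ| < m − t (for a (t,m,s)-net), is bounded by C' · N^{2A−2} (log N)^{s−1}. -/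
open MeasureTheory

/-- Variance bound for a scrambled `(t,m,s)`-net in base 2 under the decay
`σ²_ℓ ≤ C · 2^{(2A−1)|ℓ|}` with uniformly bounded gain coefficients vanishing
for `|ℓ| < m − t`. -/
theorem stmt_14 (s : ℕ) (hs : 1 ≤ s) (A C G : ℝ) (hA0 : -(1 / 2) < A) (hA1 : A < 1 / 2)
    (t : ℕ) (σ2 : (Fin s → ℕ) → ℝ)
    (hσ0 : ∀ l, 0 ≤ σ2 l)
    (hσ : ∀ l : Fin s → ℕ, σ2 l ≤ C * (2 : ℝ) ^ ((2 * A - 1) * (∑ j, (l j : ℝ)))) :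
    ∃ C' : ℝ, ∀ m : ℕ, 1 ≤ m → ∀ Γ : (Fin s → ℕ) → ℝ,
      (∀ l, 0 ≤ Γ l) → (∀ l, Γ l ≤ G) →
      (∀ l : Fin s → ℕ, (∑ j, l j) < m - t → Γ l = 0) →
      (1 / (2 : ℝ) ^ m) * (∑' l : Fin s → ℕ, Γ l * σ2 l) ≤
        C' * ((2 : ℝ) ^ m) ^ (2 * A - 2) * (Real.log ((2 : ℝ) ^ m)) ^ (s - 1) := by
  obtain ⟨k, rfl⟩ : ∃ k, s = k + 1 := ⟨s - 1, by omega⟩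
  -- the geometric ratio
  set r : ℝ := (2 : ℝ) ^ (2 * A - 1) with hr_def
  have hr0 : 0 < r := Real.rpow_pos_of_pos two_pos _
  have hr1 : r < 1 := Real.rpow_lt_one_of_one_lt_of_neg one_lt_two (by linarith)
  have hC0 : 0 ≤ C := by
    have h := (hσ0 0).trans (hσ 0)
    simpa using h
  -- σ2 bound in terms of r
  have hσr : ∀ l : Fin (k + 1) → ℕ, σ2 l ≤ C * r ^ (∑ j, l j) := by
    intro l
    have h := hσ l
    have hcast : (∑ j, (l j : ℝ)) = ((∑ j, l j : ℕ) : ℝ) := by push_cast; ring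
    rw [hcast] at h
    rwa [Real.rpow_mul (by norm_num), Real.rpow_natCast] at h
  have hr0' : ∀ n : ℕ, (0:ℝ) ≤ r ^ n := fun n => (pow_pos hr0 n).le
  -- the polynomial-times-geometric series
  set p : ℕ → ℝ := fun j => ((j : ℝ) + 1) ^ k * r ^ j with hp_def
  have hp0 : ∀ j, 0 ≤ p j := fun j => by positivity
  have hp_sum : Summable p := by
    have hq : Summable (fun n : ℕ => (n : ℝ) ^ k * r ^ n) :=
      summable_pow_mul_geometric_of_norm_lt_one k
        (by rw [Real.norm_eq_abs, abs_of_pos hr0]; exact hr1)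
    have hq1 : Summable (fun n : ℕ => ((n : ℝ) + 1) ^ k * r ^ (n + 1)) := by
      have := (summable_nat_add_iff 1).2 hq
      simpa [Nat.cast_add] using this
    have := hq1.mul_left (1 / r)
    refine this.congr fun j => ?_
    field_simp [hp_def]
    ring
  set D : ℝ := ∑' j, p j with hD_def
  have hD0 : 0 ≤ D := tsum_nonneg hp0
  -- one-dimensional tail bound
  have tail_bound : ∀ K : ℕ, ∀ T : Finset ℕ, (∀ L ∈ T, K ≤ L) →
      ∑ L ∈ T, ((L : ℝ) + 1) ^ k * r ^ L ≤ ((K : ℝ) + 1) ^ k * r ^ K * D := by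
    intro K T hT
    have step1 : ∑ L ∈ T, ((L : ℝ) + 1) ^ k * r ^ L ≤
        ∑ L ∈ T, ((K : ℝ) + 1) ^ k * r ^ K * p (L - K) := by
      refine Finset.sum_le_sum fun L hL => ?_
      have hKL : K ≤ L := hT L hL
      obtain ⟨j, rfl⟩ : ∃ j, L = K + j := ⟨L - K, by omega⟩
      have hj : K + j - K = j := by omega
      rw [hj]
      have hpow : (((K + j : ℕ) : ℝ)) + 1 ≤ ((K : ℝ) + 1) * ((j : ℝ) + 1) := by
        have hK0 : (0:ℝ) ≤ (K : ℝ) := Nat.cast_nonneg K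
        have hj0 : (0:ℝ) ≤ (j : ℝ) := Nat.cast_nonneg j
        push_cast
        nlinarith
      calc (((K + j : ℕ) : ℝ) + 1) ^ k * r ^ (K + j)
          ≤ (((K : ℝ) + 1) * ((j : ℝ) + 1)) ^ k * r ^ (K + j) := by
            apply mul_le_mul_of_nonneg_right _ (hr0' _)
            exact pow_le_pow_left₀ (by positivity) hpow k
        _ = ((K : ℝ) + 1) ^ k * r ^ K * (((j : ℝ) + 1) ^ k * r ^ j) := by
            rw [mul_pow, pow_add]; ring
    refine step1.trans ?_
    rw [← Finset.mul_sum]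
    apply mul_le_mul_of_nonneg_left _ (by positivity)
    -- ∑_{L ∈ T} p (L - K) ≤ D
    have hinj : ∀ x ∈ T, ∀ y ∈ T, x - K = y - K → x = y := by
      intro x hx y hy h
      have := hT x hx; have := hT y hy; omega
    calc ∑ L ∈ T, p (L - K) = ∑ j ∈ T.image (· - K), p j := (Finset.sum_image hinj).symm
      _ ≤ D := hp_sum.sum_le_tsum _ (fun i _ => hp0 i)
  -- cardinality of a slice
  have card_slice : ∀ (F : Finset (Fin (k + 1) → ℕ)) (L : ℕ),
      (F.filter (fun l => (∑ j, l j) = L)).card ≤ (L + 1) ^ k := by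
    intro F L
    have hsub : (F.filter (fun l => (∑ j, l j) = L)).card ≤
        (Fintype.piFinset fun _ : Fin k => Finset.range (L + 1)).card := by
      apply Finset.card_le_card_of_injOn (fun (l : Fin (k + 1) → ℕ) (i : Fin k) => l i.castSucc)
      · intro l hl
        rw [Finset.mem_coe, Finset.mem_filter] at hl
        rw [Finset.mem_coe, Fintype.mem_piFinset]
        intro i
        rw [Finset.mem_range]; beta_reduce
        have : l i.castSucc ≤ ∑ j, l j :=
          Finset.single_le_sum (fun j _ => Nat.zero_le _) (Finset.mem_univ _)
        omega
      · intro a ha b hb hab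
        simp only [Finset.coe_filter, Set.mem_setOf_eq, Finset.mem_coe] at ha hb
        have hsa : ∑ i : Fin k, a i.castSucc + a (Fin.last k) = L := by
          rw [← Fin.sum_univ_castSucc]; exact ha.2
        have hsb : ∑ i : Fin k, b i.castSucc + b (Fin.last k) = L := by
          rw [← Fin.sum_univ_castSucc]; exact hb.2
        have hcs : ∀ i : Fin k, a i.castSucc = b i.castSucc := fun i => congrFun hab i
        have hsum_eq : ∑ i : Fin k, a i.castSucc = ∑ i : Fin k, b i.castSucc :=
          Finset.sum_congr rfl fun i _ => hcs i
        rw [hsum_eq] at hsa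
        have hlast : a (Fin.last k) = b (Fin.last k) :=
          Nat.add_left_cancel (hsa.trans hsb.symm)
        funext j
        refine Fin.lastCases hlast (fun i => hcs i) j
    calc (F.filter (fun l => (∑ j, l j) = L)).card
        ≤ (Fintype.piFinset fun _ : Fin k => Finset.range (L + 1)).card := hsub
      _ = (L + 1) ^ k := by rw [Fintype.card_piFinset]; simp
  -- multi-dimensional tail bound for finite sums
  have multi_tail : ∀ (K : ℕ) (F : Finset (Fin (k + 1) → ℕ)),
      ∑ l ∈ F.filter (fun l => K ≤ ∑ j, l j), r ^ (∑ j, l j) ≤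
        ((K : ℝ) + 1) ^ k * r ^ K * D := by
    intro K F
    set F' := F.filter (fun l => K ≤ ∑ j, l j) with hF'
    set g : (Fin (k + 1) → ℕ) → ℕ := fun l => ∑ j, l j with hg
    have hmaps : ∀ l ∈ F', g l ∈ F'.image g := fun l hl => Finset.mem_image_of_mem g hl
    have hgroup : ∑ L ∈ F'.image g, ∑ l ∈ F'.filter (fun l => g l = L), r ^ (g l)
        = ∑ l ∈ F', r ^ (g l) := Finset.sum_fiberwise_of_maps_to hmaps _
    rw [← hgroup]
    have hstep : ∀ L ∈ F'.image g,
        ∑ l ∈ F'.filter (fun l => g l = L), r ^ (g l) ≤ ((L : ℝ) + 1) ^ k * r ^ L := by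
      intro L _
      have heq : ∑ l ∈ F'.filter (fun l => g l = L), r ^ (g l)
          = (F'.filter (fun l => g l = L)).card * r ^ L := by
        rw [Finset.sum_congr rfl (fun l hl => ?_), Finset.sum_const, nsmul_eq_mul]
        rw [Finset.mem_filter] at hl
        rw [hl.2]
      rw [heq]
      have hcard : ((F'.filter (fun l => g l = L)).card : ℝ) ≤ ((L : ℝ) + 1) ^ k := by
        have h1 : (F'.filter (fun l => g l = L)).card ≤ (F.filter (fun l => g l = L)).card := by
          apply Finset.card_le_card
          intro x hx
          rw [Finset.mem_filter] at hx ⊢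
          rw [hF', Finset.mem_filter] at hx
          exact ⟨hx.1.1, hx.2⟩
        have h2 := card_slice F L
        have h3 : (F'.filter (fun l => g l = L)).card ≤ (L + 1) ^ k := le_trans h1 h2
        calc ((F'.filter (fun l => g l = L)).card : ℝ) ≤ (((L + 1) ^ k : ℕ) : ℝ) := by
              exact_mod_cast h3
          _ = ((L : ℝ) + 1) ^ k := by push_cast; ring
      exact mul_le_mul_of_nonneg_right hcard (hr0' L)
    calc ∑ L ∈ F'.image g, ∑ l ∈ F'.filter (fun l => g l = L), r ^ (g l)
        ≤ ∑ L ∈ F'.image g, ((L : ℝ) + 1) ^ k * r ^ L := Finset.sum_le_sum hstep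
      _ ≤ ((K : ℝ) + 1) ^ k * r ^ K * D := by
          apply tail_bound
          intro L hL
          rw [Finset.mem_image] at hL
          obtain ⟨l, hl, rfl⟩ := hL
          rw [hF', Finset.mem_filter] at hl
          exact hl.2
  -- choose the constant
  have hlog2 : (0:ℝ) < Real.log 2 := Real.log_pos one_lt_two
  refine ⟨G * C * D * 2 ^ k * (1 / r) ^ t / (Real.log 2) ^ k, ?_⟩
  intro m hm Γ hΓ0 hΓG hΓvan
  have hG0 : 0 ≤ G := le_trans (hΓ0 0) (hΓG 0)
  set X : ℝ := G * C * (((m - t : ℕ) : ℝ) + 1) ^ k * r ^ (m - t) * D with hX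
  -- finite sum bound
  have finsum_bound : ∀ F : Finset (Fin (k + 1) → ℕ), ∑ l ∈ F, Γ l * σ2 l ≤ X := by
    intro F
    have hzero : ∀ l ∈ F, Γ l * σ2 l ≠ 0 → (m - t) ≤ ∑ j, l j := by
      intro l _ hne
      by_contra h
      exact hne (by rw [hΓvan l (by omega), zero_mul])
    rw [← Finset.sum_filter_of_ne hzero]
    have hstep : ∑ l ∈ F.filter (fun l => (m - t) ≤ ∑ j, l j), Γ l * σ2 l ≤
        ∑ l ∈ F.filter (fun l => (m - t) ≤ ∑ j, l j), G * C * r ^ (∑ j, l j) := by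
      refine Finset.sum_le_sum fun l _ => ?_
      have h1 : Γ l * σ2 l ≤ G * σ2 l := mul_le_mul_of_nonneg_right (hΓG l) (hσ0 l)
      have h2 : G * σ2 l ≤ G * (C * r ^ (∑ j, l j)) :=
        mul_le_mul_of_nonneg_left (hσr l) hG0
      calc Γ l * σ2 l ≤ G * (C * r ^ (∑ j, l j)) := le_trans h1 h2
        _ = G * C * r ^ (∑ j, l j) := by ring
    refine hstep.trans ?_
    rw [← Finset.mul_sum, hX]
    calc G * C * ∑ l ∈ F.filter (fun l => (m - t) ≤ ∑ j, l j), r ^ (∑ j, l j)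
        ≤ G * C * ((((m - t : ℕ) : ℝ) + 1) ^ k * r ^ (m - t) * D) :=
          mul_le_mul_of_nonneg_left (multi_tail (m - t) F) (by positivity)
      _ = G * C * (((m - t : ℕ) : ℝ) + 1) ^ k * r ^ (m - t) * D := by ring
  -- tsum bound
  have tsum_bound : (∑' l : Fin (k + 1) → ℕ, Γ l * σ2 l) ≤ X := by
    by_cases hsum : Summable fun l : Fin (k + 1) → ℕ => Γ l * σ2 l
    · exact hsum.tsum_le_of_sum_le finsum_bound
    · rw [tsum_eq_zero_of_not_summable hsum]
      have h := finsum_bound ∅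
      simpa using h
  -- final arithmetic
  have hElog : Real.log ((2:ℝ) ^ m) = (m : ℝ) * Real.log 2 := by
    rw [Real.log_pow]
  have h1 : r ^ m = (2:ℝ) ^ ((2 * A - 1) * (m : ℝ)) := by
    rw [hr_def, ← Real.rpow_natCast ((2:ℝ) ^ (2 * A - 1)) m,
      ← Real.rpow_mul (by norm_num)]
  have h2 : ((2:ℝ) ^ m) ^ (2 * A - 2) = (2:ℝ) ^ ((m : ℝ) * (2 * A - 2)) := by
    rw [← Real.rpow_natCast 2 m, ← Real.rpow_mul (by norm_num)]
  have h3 : (1:ℝ) / 2 ^ m = (2:ℝ) ^ (-(m : ℝ)) := by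
    rw [Real.rpow_neg (by norm_num), Real.rpow_natCast, one_div]
  have hE : (1 / (2:ℝ) ^ m) * r ^ m = ((2:ℝ) ^ m) ^ (2 * A - 2) := by
    rw [h1, h2, h3, ← Real.rpow_add two_pos]
    congr 1
    ring
  have hrK : r ^ (m - t) ≤ (1 / r) ^ t * r ^ m := by
    have hles : r ^ ((m - t) + t) ≤ r ^ m :=
      pow_le_pow_of_le_one hr0.le hr1.le (by omega)
    rw [pow_add] at hles
    rw [div_pow, one_pow, div_mul_eq_mul_div, le_div_iff₀ (by positivity)]
    linarith
  have hKm : (((m - t : ℕ) : ℝ) + 1) ^ k ≤ 2 ^ k * (m : ℝ) ^ k := by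
    rw [← mul_pow]
    apply pow_le_pow_left₀ (by positivity)
    have hle : ((m - t : ℕ) : ℝ) ≤ (m : ℝ) := by exact_mod_cast Nat.sub_le m t
    have hm1 : (1:ℝ) ≤ (m : ℝ) := by exact_mod_cast hm
    linarith
  have h2m_pos : (0:ℝ) < (2:ℝ) ^ m := by positivity
  have hE_pos : (0:ℝ) < ((2:ℝ) ^ m) ^ (2 * A - 2) := Real.rpow_pos_of_pos h2m_pos _
  calc (1 / (2:ℝ) ^ m) * (∑' l : Fin (k + 1) → ℕ, Γ l * σ2 l)
      ≤ (1 / (2:ℝ) ^ m) * X := mul_le_mul_of_nonneg_left tsum_bound (by positivity)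
    _ = G * C * D * ((((m - t : ℕ) : ℝ) + 1) ^ k * (r ^ (m - t) * (1 / (2:ℝ) ^ m))) := by
        rw [hX]; ring
    _ ≤ G * C * D * ((2 ^ k * (m : ℝ) ^ k) * (((1 / r) ^ t * r ^ m) * (1 / (2:ℝ) ^ m))) := by
        apply mul_le_mul_of_nonneg_left _ (by positivity)
        apply mul_le_mul hKm _ (by positivity) (by positivity)
        exact mul_le_mul_of_nonneg_right hrK (by positivity)
    _ = G * C * D * 2 ^ k * (1 / r) ^ t * ((2:ℝ) ^ m) ^ (2 * A - 2) * (m : ℝ) ^ k := by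
        rw [← hE]; ring
    _ = G * C * D * 2 ^ k * (1 / r) ^ t / (Real.log 2) ^ k *
        ((2:ℝ) ^ m) ^ (2 * A - 2) * (Real.log ((2:ℝ) ^ m)) ^ (k + 1 - 1) := by
        have hsk : k + 1 - 1 = k := by omega
        rw [hsk, hElog, mul_pow]
        field_simp
end
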